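/- Let (c_j)_{j∈ψ} be nonnegative reals indexed by a finite set ψ, with c_j > 0 for at least one j, and let K ∈ ℝ. Define P(S) = ∏_{j∈ψ}(1 + S c_j) and G(S) = ln(1+S)/P(S) + ∫_{ln(1+S)}^∞ ∏_{j∈ψ}(1 + (e^t − 1) c_j)^{-1} dt + (1 − 1/P(S))·K. Then for every S ≥ 0, G is differentiable at S with G'(S) = (K − ln(1+S)) · P'(S) / P(S)², where P'(S) = Σ_{i∈ψ} c_i · ∏_{j∈ψ, j≠i}(1 + S c_j). -/

import Mathlib

open MeasureTheory

/-- Interference polynomial `P(S) = ∏_j (1 + S c_j)`. -/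
noncomputable def interfPoly {ι : Type*} [Fintype ι] (c : ι → ℝ) (S : ℝ) : ℝ :=
  ∏ j, (1 + S * c j)

/-- Single-user FFR normalized average rate as a function of the SIR threshold `S`
(in the regime `S ≥ T`): cell-centre rate `ln(1+S)/P(S)` plus tail integral, plus
cell-edge contribution `(1 − 1/P(S))·K`. -/
noncomputable def ffrRateG {ι : Type*} [Fintype ι] (c : ι → ℝ) (K S : ℝ) : ℝ :=
  Real.log (1 + S) / interfPoly c S
    + (∫ t in Set.Ioi (Real.log (1 + S)), ∏ j, (1 + (Real.exp t - 1) * c j)⁻¹)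
    + (1 - (interfPoly c S)⁻¹) * K

/-- for every `S ≥ 0`, `G` is differentiable at `S` with
`G'(S) = (K − ln(1+S)) · P'(S) / P(S)²`, where
`P'(S) = ∑_i c_i ∏_{j ≠ i} (1 + S c_j)`. -/
theorem ffrRateG_hasDerivAt
    {ι : Type*} [Fintype ι] [DecidableEq ι]
    (c : ι → ℝ) (hc : ∀ j, 0 ≤ c j) (hc' : ∃ j, 0 < c j)
    (K : ℝ) :
    ∀ S : ℝ, 0 ≤ S →
      HasDerivAt (ffrRateG c K)
        ((K - Real.log (1 + S)) *
            (∑ i, c i * ∏ j ∈ Finset.univ.erase i, (1 + S * c j))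
          / (interfPoly c S) ^ 2) S := by
  obtain ⟨j0, hj0⟩ := hc'
  intro S hS
  set f : ℝ → ℝ := fun t => ∏ j, (1 + (Real.exp t - 1) * c j)⁻¹ with hf_def
  set C : ℝ := 1 + ∑ j, c j with hC_def
  have hsum : 0 ≤ ∑ j, c j := Finset.sum_nonneg fun j _ => hc j
  have hC : 0 < C := by positivity
  have hcC : ∀ j, c j ≤ C := by
    intro j
    have := Finset.single_le_sum (fun j _ => hc j) (Finset.mem_univ j)
    simp only [hC_def]; linarith
  set b : ℝ := -(1 / (2 * C)) with hb_def
  clear_value C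
  have hb_neg : b < 0 := by
    have : 0 < 1 / (2 * C) := by positivity
    simp only [hb_def]; linarith
  clear_value b
  -- each factor is at least 1/2 on [b, ∞)
  have hfac : ∀ t, b ≤ t → ∀ j, (1:ℝ)/2 ≤ 1 + (Real.exp t - 1) * c j := by
    intro t ht j
    have hexp : t ≤ Real.exp t - 1 := by
      have := Real.add_one_le_exp t; linarith
    have h1 : t * c j ≤ (Real.exp t - 1) * c j :=
      mul_le_mul_of_nonneg_right hexp (hc j)
    have h2 : b * c j ≤ t * c j := mul_le_mul_of_nonneg_right ht (hc j)
    have key : -(1 / (2 * C)) * c j + 1/2 = (C - c j) / (2 * C) := by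
      field_simp; ring
    have h3 : 0 ≤ (C - c j) / (2 * C) :=
      div_nonneg (by linarith [hcC j]) (by linarith)
    have : -(1/2 : ℝ) ≤ b * c j := by
      simp only [hb_def]; linarith
    linarith
  have hfacpos : ∀ t, b ≤ t → ∀ j, (0:ℝ) < 1 + (Real.exp t - 1) * c j := by
    intro t ht j; linarith [hfac t ht j]
  have hfpos : ∀ t, b ≤ t → 0 < f t := by
    intro t ht
    exact Finset.prod_pos fun j _ => inv_pos.mpr (hfacpos t ht j)
  -- continuity on Ioi b
  have hcont : ContinuousOn f (Set.Ioi b) := by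
    apply continuousOn_finset_prod
    intro j _
    apply ContinuousOn.inv₀
    · exact (continuous_const.add ((Real.continuous_exp.sub continuous_const).mul
        continuous_const)).continuousOn
    · intro t ht
      exact ne_of_gt (hfacpos t (le_of_lt ht) j)
  -- exponential bound
  set δ : ℝ := min (c j0) (1/2) with hδ_def
  have hδ : 0 < δ := lt_min hj0 (by norm_num)
  have hδle : δ ≤ 1/2 := min_le_right _ _
  have hδc : δ ≤ c j0 := min_le_left _ _
  set n : ℕ := Fintype.card ι with hn_def
  set M : ℝ := 2 ^ n * δ⁻¹ with hM_def
  have hlow : ∀ t, b ≤ t → δ * Real.exp t ≤ 1 + (Real.exp t - 1) * c j0 := by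
    intro t ht
    rcases le_or_gt t 0 with h | h
    · have he1 : Real.exp t ≤ 1 := Real.exp_le_one_iff.mpr h
      have := hfac t ht j0
      nlinarith [Real.exp_pos t]
    · have he1 : 1 ≤ Real.exp t := Real.one_le_exp h.le
      nlinarith [mul_nonneg (by linarith : (0:ℝ) ≤ Real.exp t - 1)
        (by linarith : (0:ℝ) ≤ c j0 - δ)]
  have hbound : ∀ t, b ≤ t → f t ≤ M * Real.exp (-t) := by
    intro t ht
    have hsplit : f t = (1 + (Real.exp t - 1) * c j0)⁻¹ *
        ∏ j ∈ Finset.univ.erase j0, (1 + (Real.exp t - 1) * c j)⁻¹ :=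
      (Finset.mul_prod_erase Finset.univ _ (Finset.mem_univ j0)).symm
    have h1 : (1 + (Real.exp t - 1) * c j0)⁻¹ ≤ δ⁻¹ * Real.exp (-t) := by
      have hpos : 0 < δ * Real.exp t := by positivity
      have := inv_anti₀ hpos (hlow t ht)
      rw [Real.exp_neg]
      rwa [mul_inv] at this
    have h2 : ∏ j ∈ Finset.univ.erase j0, (1 + (Real.exp t - 1) * c j)⁻¹ ≤ 2 ^ n := by
      calc ∏ j ∈ Finset.univ.erase j0, (1 + (Real.exp t - 1) * c j)⁻¹
          ≤ ∏ _j ∈ Finset.univ.erase j0, (2:ℝ) := by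
            apply Finset.prod_le_prod
            · intro j _; exact le_of_lt (inv_pos.mpr (hfacpos t ht j))
            · intro j _
              have := inv_anti₀ (by norm_num : (0:ℝ) < 1/2) (hfac t ht j)
              norm_num at this
              exact this
        _ = (2:ℝ) ^ (Finset.univ.erase j0).card := Finset.prod_const 2
        _ ≤ (2:ℝ) ^ n := by
            apply pow_le_pow_right₀ (by norm_num)
            simpa [hn_def, Finset.card_univ] using
              Finset.card_erase_le (s := (Finset.univ : Finset ι)) (a := j0)
    calc f t = (1 + (Real.exp t - 1) * c j0)⁻¹ *
        ∏ j ∈ Finset.univ.erase j0, (1 + (Real.exp t - 1) * c j)⁻¹ := hsplit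
      _ ≤ (δ⁻¹ * Real.exp (-t)) * 2 ^ n := by
          apply mul_le_mul h1 h2
          · exact Finset.prod_nonneg fun j _ => le_of_lt (inv_pos.mpr (hfacpos t ht j))
          · positivity
      _ = M * Real.exp (-t) := by simp only [hM_def]; ring
  -- integrability
  have hg_int : IntegrableOn (fun t => M * Real.exp (-t)) (Set.Ioi b) := by
    have := exp_neg_integrableOn_Ioi b (one_pos)
    have h2 : IntegrableOn (fun t => M * Real.exp (-1 * t)) (Set.Ioi b) := this.const_mul M
    simpa using h2
  have hmeas : AEStronglyMeasurable f (volume.restrict (Set.Ioi b)) :=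
    hcont.aestronglyMeasurable measurableSet_Ioi
  have hInt : IntegrableOn f (Set.Ioi b) := by
    apply Integrable.mono' hg_int hmeas
    rw [ae_restrict_iff' measurableSet_Ioi]
    refine ae_of_all _ fun t ht => ?_
    rw [Real.norm_eq_abs, abs_of_nonneg (le_of_lt (hfpos t (le_of_lt ht)))]
    exact hbound t (le_of_lt ht)
  -- splitting the tail integral
  have hsplit : ∀ x, b < x →
      (∫ t in Set.Ioi x, f t) = (∫ t in Set.Ioi b, f t) - ∫ t in b..x, f t := by
    intro x hx
    rw [intervalIntegral.integral_of_le hx.le]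
    have h := MeasureTheory.setIntegral_union (Set.Ioc_disjoint_Ioi le_rfl)
      measurableSet_Ioi (hInt.mono_set Set.Ioc_subset_Ioi_self)
      (hInt.mono_set (Set.Ioi_subset_Ioi hx.le))
    rw [Set.Ioc_union_Ioi_eq_Ioi hx.le] at h
    linarith
  -- derivative facts
  have h1S : (0:ℝ) < 1 + S := by linarith
  set x₀ : ℝ := Real.log (1 + S) with hx₀_def
  have hx₀ : 0 ≤ x₀ := Real.log_nonneg (by linarith)
  have hbx : b < x₀ := lt_of_lt_of_le hb_neg hx₀
  have hlog : HasDerivAt (fun u => Real.log (1 + u)) ((1 + S)⁻¹) S := by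
    have := ((hasDerivAt_id S).const_add 1).log (ne_of_gt h1S)
    simpa using this
  set P' : ℝ := ∑ i, c i * ∏ j ∈ Finset.univ.erase i, (1 + S * c j) with hP'_def
  have hP : HasDerivAt (fun u => interfPoly c u) P' S := by
    have h := HasDerivAt.fun_finsetProd (u := Finset.univ) (x := S)
      (f := fun i u => 1 + u * c i) (f' := fun i => c i)
      (fun i _ => (hasDerivAt_mul_const (c i)).const_add 1)
    refine h.congr_deriv ?_
    simp only [hP'_def, smul_eq_mul]
    exact Finset.sum_congr rfl fun i _ => mul_comm _ _
  have hPpos : 0 < interfPoly c S := by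
    apply Finset.prod_pos
    intro j _
    have := mul_nonneg hS (hc j)
    linarith
  have hP0 : interfPoly c S ≠ 0 := ne_of_gt hPpos
  -- FTC
  have hii : IntervalIntegrable f volume b x₀ :=
    (intervalIntegrable_iff_integrableOn_Ioc_of_le hbx.le).mpr
      (hInt.mono_set Set.Ioc_subset_Ioi_self)
  have hsm : StronglyMeasurableAtFilter f (nhds x₀) :=
    hcont.stronglyMeasurableAtFilter isOpen_Ioi _ hbx
  have hca : ContinuousAt f x₀ := hcont.continuousAt (Ioi_mem_nhds hbx)
  have hFTC : HasDerivAt (fun x => ∫ t in b..x, f t) (f x₀) x₀ :=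
    intervalIntegral.integral_hasDerivAt_right hii hsm hca
  have hH : HasDerivAt (fun u => ∫ t in b..(Real.log (1 + u)), f t)
      (f x₀ * (1 + S)⁻¹) S := by have := hFTC.comp S hlog; exact this
  have hfx₀ : f x₀ = (interfPoly c S)⁻¹ := by
    simp only [hf_def, hx₀_def, Real.exp_log h1S, interfPoly]
    rw [← Finset.prod_inv_distrib]
    simp
  -- assemble
  have hA : HasDerivAt (fun u => Real.log (1 + u) / interfPoly c u)
      (((1 + S)⁻¹ * interfPoly c S - Real.log (1 + S) * P') / (interfPoly c S) ^ 2) S :=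
    hlog.div hP hP0
  have hB : HasDerivAt (fun u => (∫ t in Set.Ioi b, f t) - ∫ t in b..(Real.log (1 + u)), f t)
      (-(f x₀ * (1 + S)⁻¹)) S := hH.const_sub _
  have hCd : HasDerivAt (fun u => (1 - (interfPoly c u)⁻¹) * K)
      (-(-P' / (interfPoly c S) ^ 2) * K) S := ((hP.inv hP0).const_sub 1).mul_const K
  have htot := (hA.add hB).add hCd
  have hEv : (ffrRateG c K) =ᶠ[nhds S]
      (fun u => Real.log (1 + u) / interfPoly c u
        + ((∫ t in Set.Ioi b, f t) - ∫ t in b..(Real.log (1 + u)), f t)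
        + (1 - (interfPoly c u)⁻¹) * K) := by
    have hmem : ∀ᶠ u in nhds S, Real.log (1 + u) ∈ Set.Ioi b :=
      hlog.continuousAt.eventually_mem (Ioi_mem_nhds hbx)
    filter_upwards [hmem] with u hu
    simp only [ffrRateG]
    rw [hsplit _ hu]
  have := htot.congr_of_eventuallyEq hEv
  refine this.congr_deriv ?_
  rw [hfx₀]
  field_simp
  ring
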